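/- arXiv:2101.01676 — 2 statements merged into one kernel-verified Lean document; each statement's English description precedes it below -/
import Mathlib

section
/- Let 𝔐 be a class of preference models and ★ an 𝔐-DP3-compliant dynamic operator closed over 𝔐, and set 𝔇 = ⟨𝔐, ★⟩. Then for every propositional formula φ ∈ L_0 and every formula ξ ∈ L_≤(★): 𝔇 ⊨ B(φ | [★φ]ξ) → [★φ]B(φ | ξ). -/
inductive PForm (P : Type) : Type
  | atom : P → PForm P
  | neg  : PForm P → PForm P
  | and  : PForm P → PForm P → PForm P

inductive DForm (P : Type) : Type
  | atom  : P → DForm P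
  | neg   : DForm P → DForm P
  | and   : DForm P → DForm P → DForm P
  | all   : DForm P → DForm P
  | boxLe : DForm P → DForm P
  | boxLt : DForm P → DForm P
  | dyn   : PForm P → DForm P → DForm P

structure PrefModel (P : Type) where
  W : Type
  le : W → W → Prop
  refl : ∀ w, le w w
  trans : ∀ w₁ w₂ w₃, le w₁ w₂ → le w₂ w₃ → le w₁ w₃
  wf : WellFounded (fun w w' => le w w' ∧ ¬ le w' w)
  val : P → Set W

namespace PrefModel
variable {P : Type}
def lt (M : PrefModel P) (w w' : M.W) : Prop := M.le w w' ∧ ¬ M.le w' w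
def Min (M : PrefModel P) (S : Set M.W) : Set M.W :=
  {w | w ∈ S ∧ ¬ ∃ w' ∈ S, M.le w' w ∧ ¬ M.le w w'}
end PrefModel

def psat {P : Type} (M : PrefModel P) : PForm P → M.W → Prop
  | .atom p, w => w ∈ M.val p
  | .neg φ, w => ¬ psat M φ w
  | .and φ ψ, w => psat M φ w ∧ psat M ψ w

def pext {P : Type} (M : PrefModel P) (φ : PForm P) : Set M.W := {w | psat M φ w}

structure DynOp (P : Type) where
  rel : (M : PrefModel P) → PForm P → M.W → M.W → Prop
  refl : ∀ M φ w, rel M φ w w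
  trans : ∀ M φ w₁ w₂ w₃, rel M φ w₁ w₂ → rel M φ w₂ w₃ → rel M φ w₁ w₃
  wf : ∀ M φ, WellFounded (fun w w' => rel M φ w w' ∧ ¬ rel M φ w' w)

def DynOp.apply {P : Type} (s : DynOp P) (M : PrefModel P) (φ : PForm P) : PrefModel P where
  W := M.W
  le := s.rel M φ
  refl := s.refl M φ
  trans := s.trans M φ
  wf := s.wf M φ
  val := M.val

def DynOp.srel {P : Type} (s : DynOp P) (M : PrefModel P) (φ : PForm P) (w w' : M.W) : Prop :=
  s.rel M φ w w' ∧ ¬ s.rel M φ w' w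

def PForm.toD {P : Type} : PForm P → DForm P
  | .atom p => .atom p
  | .neg φ => .neg φ.toD
  | .and φ ψ => .and φ.toD ψ.toD

namespace DForm
variable {P : Type}
def imp (ξ ψ : DForm P) : DForm P := .neg (.and ξ (.neg ψ))
def iff (ξ ψ : DForm P) : DForm P := .and (imp ξ ψ) (imp ψ ξ)
def or (ξ ψ : DForm P) : DForm P := .neg (.and (.neg ξ) (.neg ψ))
def exi (ξ : DForm P) : DForm P := .neg (.all (.neg ξ))
def diaLt (ξ : DForm P) : DForm P := .neg (.boxLt (.neg ξ))
def mu (ξ : DForm P) : DForm P := .and ξ (.neg (diaLt ξ))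
def bel (ψ χ : DForm P) : DForm P := .all (imp (mu χ) ψ)
end DForm

def dsat {P : Type} (s : DynOp P) : DForm P → (M : PrefModel P) → M.W → Prop
  | .atom p, M, w => w ∈ M.val p
  | .neg ξ, M, w => ¬ dsat s ξ M w
  | .and ξ₁ ξ₂, M, w => dsat s ξ₁ M w ∧ dsat s ξ₂ M w
  | .all ξ, M, _ => ∀ w', dsat s ξ M w'
  | .boxLe ξ, M, w => ∀ w', M.le w' w → dsat s ξ M w'
  | .boxLt ξ, M, w => ∀ w', M.lt w' w → dsat s ξ M w'
  | .dyn φ ξ, M, w => dsat s ξ (s.apply M φ) w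

def ClosedOver {P : Type} (s : DynOp P) (𝔐 : Set (PrefModel P)) : Prop :=
  ∀ M ∈ 𝔐, ∀ φ : PForm P, s.apply M φ ∈ 𝔐

/-- `★` is `𝔐`-DP3-compliant. -/
def DP3Compliant {P : Type} (s : DynOp P) (𝔐 : Set (PrefModel P)) : Prop :=
  ∀ M ∈ 𝔐, ∀ (φ : PForm P) (w w' : M.W),
    psat M φ w → ¬ psat M φ w' → M.lt w w' →
      ∀ ξ : DForm P, dsat s (.dyn φ ξ) M w →
        ∃ w'' : M.W, psat M φ w'' ∧ dsat s (.dyn φ ξ) M w'' ∧ s.srel M φ w'' w'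

lemma toD_iff {P : Type} (s : DynOp P) (ψ : PForm P) (M : PrefModel P) (w : M.W) :
    dsat s ψ.toD M w ↔ psat M ψ w := by
  induction ψ with
  | atom p => exact Iff.rfl
  | neg φ ih => simp only [PForm.toD, dsat, psat, ih]
  | and φ χ ih1 ih2 => simp only [PForm.toD, dsat, psat, ih1, ih2]

lemma psat_apply {P : Type} (s : DynOp P) (φ ψ : PForm P) (M : PrefModel P) (w : M.W) :
    psat (s.apply M φ) ψ w ↔ psat M ψ w := by
  induction ψ with
  | atom p => exact Iff.rfl
  | neg χ ih => simp only [psat, ih]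
  | and χ₁ χ₂ ih1 ih2 => simp only [psat, ih1, ih2]

theorem dp3_compliance_syntactic {P : Type}
    (𝔐 : Set (PrefModel P)) (s : DynOp P) (hclosed : ClosedOver s 𝔐)
    (hdp3 : DP3Compliant s 𝔐) (φ : PForm P) (ξ : DForm P) :
    ∀ M ∈ 𝔐, ∀ w : M.W,
      dsat s ((DForm.bel φ.toD (DForm.dyn φ ξ)).imp
        (DForm.dyn φ (DForm.bel φ.toD ξ))) M w := by
  intro M hM w
  intro h
  obtain ⟨hbel, hnB⟩ := h
  apply hnB
  show ∀ w' : (s.apply M φ).W,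
    ¬ (dsat s (DForm.mu ξ) (s.apply M φ) w' ∧ ¬ dsat s φ.toD (s.apply M φ) w')
  intro w' hc
  obtain ⟨⟨hxi, hnd⟩, hnphi⟩ := hc
  have hnophi : ¬ psat M φ w' := fun hp =>
    hnphi ((toD_iff s φ (s.apply M φ) w').mpr ((psat_apply s φ φ M w').mpr hp))
  have hmin' : ∀ v : M.W, (s.apply M φ).lt v w' → ¬ dsat s ξ (s.apply M φ) v := by
    by_contra hcon
    exact hnd (fun hb => hcon (fun v hv hd => hb v hv hd))
  obtain ⟨u, ⟨hud, hule⟩, humin⟩ := M.wf.has_min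
    {u : M.W | dsat s (.dyn φ ξ) M u ∧ M.le u w'}
    ⟨w', hxi, M.refl w'⟩
  have hmuU : dsat s (.mu (.dyn φ ξ)) M u := by
    refine ⟨hud, fun hdia => ?_⟩
    have hdia' : ¬ (∀ v, M.lt v u → ¬ dsat s (.dyn φ ξ) M v) := hdia
    apply hdia'
    intro v hv hdv
    exact humin v ⟨hdv, M.trans v u w' hv.1 hule⟩ hv
  have hphiu : psat M φ u := by
    have hb := hbel u
    by_contra hnp
    exact hb ⟨hmuU, fun hp => hnp ((toD_iff s φ M u).mp hp)⟩
  by_cases hwu : M.le w' u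
  · have hmuW : dsat s (.mu (.dyn φ ξ)) M w' := by
      refine ⟨hxi, fun hdia => ?_⟩
      have hdia' : ¬ (∀ v, M.lt v w' → ¬ dsat s (.dyn φ ξ) M v) := hdia
      apply hdia'
      intro v hv hdv
      exact humin v ⟨hdv, hv.1⟩
        ⟨M.trans v w' u hv.1 hwu, fun hu => hv.2 (M.trans w' u v hwu hu)⟩
    apply hnophi
    have hb := hbel w'
    by_contra hnp
    exact hb ⟨hmuW, fun hp => hnp ((toD_iff s φ M w').mp hp)⟩
  · obtain ⟨w'', hφ'', hd'', hs''⟩ :=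
      hdp3 M hM φ u w' hphiu hnophi ⟨hule, hwu⟩ ξ hud
    exact hmin' w'' hs'' hd''
end

section
/- Let 𝔐 be a class of preference models and ℭ a class of dynamic operators closed over 𝔐 such that every ★ ∈ ℭ satisfies (GR). Then for every propositional formula φ ∈ L_0, the formula (μ¬φ ∨ μ⊤) ↔ [★φ]μ⊤ is valid in ⟨𝔐, ℭ⟩, where ⊤ is a fixed propositional tautology. -/
/-- `★` satisfies (GR). -/
def GR {P : Type} (s : DynOp P) : Prop :=
  ∀ (M : PrefModel P) (φ : PForm P),
    (s.apply M φ).Min Set.univ = M.Min Set.univ ∪ M.Min (pext M (PForm.neg φ))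


lemma dsat_toD {P : Type} (s : DynOp P) (p : PForm P) :
    ∀ (M : PrefModel P) (w : M.W), dsat s p.toD M w ↔ psat M p w := by
  induction p with
  | atom q => intro M w; rfl
  | neg p ih => intro M w; simp [PForm.toD, dsat, psat, ih]
  | and p q ihp ihq => intro M w; simp [PForm.toD, dsat, psat, ihp, ihq]

lemma dsat_or {P : Type} (s : DynOp P) (ξ ψ : DForm P) (M : PrefModel P) (w : M.W) :
    dsat s (ξ.or ψ) M w ↔ (dsat s ξ M w ∨ dsat s ψ M w) := by
  simp only [DForm.or, dsat]; tauto

lemma dsat_iff {P : Type} (s : DynOp P) (ξ ψ : DForm P) (M : PrefModel P) (w : M.W) :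
    dsat s (ξ.iff ψ) M w ↔ (dsat s ξ M w ↔ dsat s ψ M w) := by
  simp only [DForm.iff, DForm.imp, dsat]; tauto

lemma dsat_mu {P : Type} (s : DynOp P) (ξ : DForm P) (M : PrefModel P) (w : M.W) :
    dsat s (DForm.mu ξ) M w ↔ (dsat s ξ M w ∧ ∀ w', M.lt w' w → ¬ dsat s ξ M w') := by
  simp only [DForm.mu, DForm.diaLt, dsat, not_not]

lemma dsat_mu_top {P : Type} (s : DynOp P) (top : PForm P)
    (htop : ∀ (M : PrefModel P) (w : M.W), psat M top w)
    (M : PrefModel P) (w : M.W) :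
    dsat s (DForm.mu top.toD) M w ↔ w ∈ M.Min Set.univ := by
  rw [dsat_mu]
  constructor
  · rintro ⟨-, h⟩
    exact ⟨trivial, fun ⟨w', _, hlt⟩ => h w' hlt ((dsat_toD s top M w').2 (htop M w'))⟩
  · rintro ⟨-, h⟩
    exact ⟨(dsat_toD s top M w).2 (htop M w), fun w' hlt _ => h ⟨w', trivial, hlt⟩⟩

lemma dsat_mu_neg {P : Type} (s : DynOp P) (φ : PForm P)
    (M : PrefModel P) (w : M.W) :
    dsat s (DForm.mu (DForm.neg φ.toD)) M w ↔ w ∈ M.Min (pext M (PForm.neg φ)) := by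
  rw [dsat_mu]
  have e : ∀ w' : M.W, dsat s (DForm.neg φ.toD) M w' ↔ psat M (PForm.neg φ) w' := by
    intro w'; exact not_congr (dsat_toD s φ M w')
  constructor
  · rintro ⟨h1, h2⟩
    exact ⟨(e w).1 h1, fun ⟨w', hw', hlt⟩ => h2 w' hlt ((e w').2 hw')⟩
  · rintro ⟨h1, h2⟩
    exact ⟨(e w).2 h1, fun w' hlt hw' => h2 ⟨w', (e w').1 hw', hlt⟩⟩

theorem gr_validity {P : Type} (𝔐 : Set (PrefModel P)) (ℭ : Set (DynOp P))
    (hclosed : ∀ s ∈ ℭ, ClosedOver s 𝔐) (hgr : ∀ s ∈ ℭ, GR s)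
    (φ top : PForm P) (htop : ∀ (M : PrefModel P) (w : M.W), psat M top w) :
    ∀ s ∈ ℭ, ∀ M ∈ 𝔐, ∀ w : M.W,
      dsat s (((DForm.mu (DForm.neg φ.toD)).or (DForm.mu top.toD)).iff
        (DForm.dyn φ (DForm.mu top.toD))) M w := by
  intro s hs M hM w
  have hGR := hgr s hs M φ
  have key : dsat s ((DForm.mu (DForm.neg φ.toD)).or (DForm.mu top.toD)) M w ↔
      dsat s (DForm.dyn φ (DForm.mu top.toD)) M w := by
    have hlhs : dsat s ((DForm.mu (DForm.neg φ.toD)).or (DForm.mu top.toD)) M w ↔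
        w ∈ M.Min Set.univ ∪ M.Min (pext M (PForm.neg φ)) := by
      rw [dsat_or, dsat_mu_neg, dsat_mu_top s top htop, Set.mem_union, or_comm]
    have hrhs : dsat s (DForm.dyn φ (DForm.mu top.toD)) M w ↔
        w ∈ (s.apply M φ).Min Set.univ := by
      show dsat s (DForm.mu top.toD) (s.apply M φ) w ↔ _
      exact dsat_mu_top s top htop (s.apply M φ) w
    rw [hlhs, hrhs, hGR]
    exact Iff.rfl
  exact (dsat_iff s _ _ M w).2 key
end
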